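/- Let X₁, …, Xₙ be independent sub-uniform random variables and let X̄ₙ = n⁻¹ Σᵢ Xᵢ. Then for every t with 0 ≤ t ≤ 1/2, P(1/2 − X̄ₙ ≥ t) ≤ exp(−6 n t²). (This improves the exponent 2 of Hoeffding's inequality for [0,1]-valued variables to 6.) -/

import Mathlib

open MeasureTheory Set
open scoped Nat

lemma fact_aux (n : ℕ) : 6 ^ n * n ! ≤ (2 * n + 1)! := by
  induction n with
  | zero => simp
  | succ k ih =>
    have h1 : (2 * (k+1) + 1)! = (2*k+3) * ((2*k+2) * (2*k+1)!) := by
      have : 2 * (k+1) + 1 = (2*k+2) + 1 := by ring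
      rw [this, Nat.factorial_succ, Nat.factorial_succ]
    calc 6 ^ (k+1) * (k+1)! = (6 * (k+1)) * (6 ^ k * k !) := by
          rw [pow_succ, Nat.factorial_succ]; ring
      _ ≤ ((2*k+3) * (2*k+2)) * (2*k+1)! := by
          apply Nat.mul_le_mul _ ih
          nlinarith
      _ = (2 * (k+1) + 1)! := by rw [h1]; ring

lemma sinh_le_aux (x : ℝ) (hx : 0 ≤ x) : Real.sinh x ≤ x * Real.exp (x ^ 2 / 6) := by
  rw [Real.sinh_eq_tsum, Real.exp_eq_exp_ℝ, NormedSpace.exp_eq_tsum ℝ, ← tsum_mul_left]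
  refine Summable.tsum_le_tsum (fun n ↦ ?_) x.hasSum_sinh.summable
    (((NormedSpace.expSeries_summable' (x ^ 2 / 6)).mul_left x))
  have h6 : (0:ℝ) < 6 ^ n * n ! := by positivity
  have key : ((6:ℝ) ^ n * n !) ≤ ((2*n+1)! : ℝ) := by
    exact_mod_cast fact_aux n
  have : x * ((n !:ℝ)⁻¹ • (x ^ 2 / 6) ^ n) = x ^ (2*n+1) / (6 ^ n * n !) := by
    rw [smul_eq_mul, div_pow, ← pow_mul]
    field_simp
    ring
  rw [this]
  gcongr

lemma exp_mgf_bound (l : ℝ) (hl : 0 < l) :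
    (1 - Real.exp (-l)) / l ≤ Real.exp (l ^ 2 / 24 - l / 2) := by
  have h2 : Real.exp (l/2) - Real.exp (-(l/2)) ≤ l * Real.exp (l ^ 2 / 24) := by
    have h := sinh_le_aux (l/2) (by positivity)
    rw [Real.sinh_eq] at h
    have e : ((l/2) ^ 2 / 6 : ℝ) = l ^ 2 / 24 := by ring
    rw [e] at h
    nlinarith [h]
  calc (1 - Real.exp (-l)) / l
      = Real.exp (-(l/2)) * (Real.exp (l/2) - Real.exp (-(l/2))) / l := by
        rw [mul_sub, ← Real.exp_add, ← Real.exp_add, show -(l/2)+l/2 = (0:ℝ) by ring,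
          show -(l/2)+-(l/2) = -l by ring, Real.exp_zero]
    _ ≤ Real.exp (-(l/2)) * (l * Real.exp (l ^ 2 / 24)) / l := by
        gcongr
    _ = Real.exp (l ^ 2 / 24 - l / 2) := by
        rw [Real.exp_sub, Real.exp_neg]
        field_simp


/-- A real-valued random variable `X` on a probability space `(Ω, P)` is *sub-uniform*
if it is dominated in the convex order by the uniform distribution `U` on `[0,1]`:
`E[h(X)] ≤ E[h(U)]` for every convex `h : ℝ → ℝ` for which both expectations exist.
(The expectation `E[h(X)]` exists, with a value in `(-∞, ∞]`, precisely when the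
negative part of `h ∘ X` is integrable; in that case the inequality
`E[h(X)] ≤ E[h(U)] < ∞` forces `h ∘ X` to be integrable.  The expectation `E[h(U)]`
always exists, since a convex function on `ℝ` is continuous, hence bounded on `[0,1]`.) -/
def SubUniform {Ω : Type*} [MeasurableSpace Ω] (P : Measure Ω) (X : Ω → ℝ) : Prop :=
  ∀ h : ℝ → ℝ, ConvexOn ℝ Set.univ h →
    Integrable (fun ω => max (-(h (X ω))) 0) P →
    Integrable (fun ω => h (X ω)) P ∧
      ∫ ω, h (X ω) ∂P ≤ ∫ x in Set.Icc (0:ℝ) 1, h x ∂volume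

open ProbabilityTheory in
/-- Let `X₁, …, Xₙ` be independent sub-uniform random variables and let
`X̄ₙ = n⁻¹ ∑ᵢ Xᵢ`.  Then for every `0 ≤ t ≤ 1/2`,
`P(1/2 − X̄ₙ ≥ t) ≤ exp(−6 n t²)`. -/
theorem subUniform_avg_hoeffding_improved {Ω : Type*} [MeasurableSpace Ω] (P : Measure Ω)
    [IsProbabilityMeasure P] (n : ℕ) (hn : 0 < n) (X : Fin n → Ω → ℝ)
    (hmeas : ∀ i, Measurable (X i))
    (hind : iIndepFun X P)
    (hsub : ∀ i, SubUniform P (X i))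
    (t : ℝ) (ht0 : 0 ≤ t) (ht1 : t ≤ 1/2) :
    P {ω | 1/2 - (∑ i, X i ω) / n ≥ t} ≤ ENNReal.ofReal (Real.exp (-6 * n * t ^ 2)) := by
  rcases eq_or_lt_of_le ht0 with h0 | htpos
  · have : ENNReal.ofReal (Real.exp (-6 * n * t ^ 2)) = 1 := by
      rw [← h0]; norm_num
    rw [this]
    exact prob_le_one
  set l : ℝ := 12 * t with hldef
  have hlpos : 0 < l := by positivity
  have hnpos : (0:ℝ) < n := by exact_mod_cast hn
  -- convexity of x ↦ exp (-l * x)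
  have hconv : ConvexOn ℝ Set.univ (fun x : ℝ => Real.exp (-l * x)) := by
    have := convexOn_exp.comp_affineMap (((-l) • LinearMap.id : ℝ →ₗ[ℝ] ℝ).toAffineMap)
    refine ⟨convex_univ, fun x _ y _ a b ha hb hab => ?_⟩
    have h := this.2 (mem_univ x) (mem_univ y) ha hb hab
    simpa [Function.comp, smul_eq_mul] using h
  -- per-variable MGF bound
  have hint : ∀ i, Integrable (fun ω => Real.exp (-l * X i ω)) P ∧
      ∫ ω, Real.exp (-l * X i ω) ∂P ≤ ∫ x in Set.Icc (0:ℝ) 1, Real.exp (-l * x) ∂volume := by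
    intro i
    refine hsub i _ hconv ?_
    have : (fun ω => max (-(Real.exp (-l * X i ω))) 0) = fun _ => (0:ℝ) :=
      funext fun ω => max_eq_right (neg_nonpos.mpr (Real.exp_pos _).le)
    rw [this]
    exact integrable_const 0
  have hI : ∫ x in Set.Icc (0:ℝ) 1, Real.exp (-l * x) ∂volume = (1 - Real.exp (-l)) / l := by
    rw [MeasureTheory.integral_Icc_eq_integral_Ioc, ← intervalIntegral.integral_of_le zero_le_one,
      intervalIntegral.integral_comp_mul_left Real.exp (neg_ne_zero.mpr hlpos.ne'),
      integral_exp]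
    rw [mul_zero, mul_one, Real.exp_zero, smul_eq_mul]
    have hl' : l ≠ 0 := hlpos.ne'
    field_simp
    ring
  have hmgf : ∀ i, mgf (X i) P (-l) ≤ Real.exp (l ^ 2 / 24 - l / 2) := by
    intro i
    have h1 : mgf (X i) P (-l) = ∫ ω, Real.exp (-l * X i ω) ∂P := rfl
    rw [h1]
    exact le_trans ((hint i).2.trans_eq hI) (exp_mgf_bound l hlpos)
  have hS_int : Integrable (fun ω => Real.exp (-l * (∑ i, X i) ω)) P :=
    hind.integrable_exp_mul_sum hmeas (fun i _ => (hint i).1)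
  have chern := measure_le_le_exp_mul_mgf (μ := P) (X := ∑ i, X i) (t := -l)
    ((1/2 - t) * n) (neg_nonpos.mpr hlpos.le) hS_int
  rw [hind.mgf_sum hmeas Finset.univ] at chern
  have hprod : ∏ i, mgf (X i) P (-l) ≤ (Real.exp (l ^ 2 / 24 - l / 2)) ^ n := by
    calc ∏ i, mgf (X i) P (-l) ≤ ∏ _i : Fin n, Real.exp (l ^ 2 / 24 - l / 2) :=
          Finset.prod_le_prod (fun i _ => mgf_nonneg) (fun i _ => hmgf i)
      _ = (Real.exp (l ^ 2 / 24 - l / 2)) ^ n := by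
          rw [Finset.prod_const, Finset.card_univ, Fintype.card_fin]
  have hEeq : {ω | 1/2 - (∑ i, X i ω) / n ≥ t} = {ω | (∑ i, X i) ω ≤ (1/2 - t) * n} := by
    ext ω
    simp only [Set.mem_setOf_eq, Finset.sum_apply, ge_iff_le]
    rw [le_sub_comm, div_le_iff₀ hnpos]
  have hfinal : Real.exp (-(-l) * ((1/2 - t) * n)) * (Real.exp (l ^ 2 / 24 - l / 2)) ^ n
      = Real.exp (-6 * n * t ^ 2) := by
    rw [← Real.exp_nat_mul, ← Real.exp_add]
    congr 1
    rw [hldef]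
    ring
  rw [hEeq]
  calc P {ω | (∑ i, X i) ω ≤ (1/2 - t) * n}
      = ENNReal.ofReal (P {ω | (∑ i, X i) ω ≤ (1/2 - t) * n}).toReal :=
        (ENNReal.ofReal_toReal (measure_ne_top P _)).symm
    _ ≤ ENNReal.ofReal (Real.exp (-6 * n * t ^ 2)) := by
        refine ENNReal.ofReal_le_ofReal ?_
        refine chern.trans ?_
        rw [← hfinal]
        exact mul_le_mul_of_nonneg_left hprod (Real.exp_pos _).le
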